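/- Let a, b be integers each of absolute value at least 2 with ab ≥ 6 or ab ≤ -4. Then for z in the closed unit disk with Im(z) ≥ 0, the composite map z ↦ -1/((-1/(z+a)) + b) decreases the imaginary part by at least a factor of 4, i.e., Im of the image is at most Im(z)/4. -/

import Mathlib

lemma int_key (a b : ℤ) (ha : 2 ≤ |a|) (hb : 2 ≤ |b|)
    (hab : 6 ≤ a * b ∨ a * b ≤ -4) : |b| + 2 ≤ |a * b - 1| := by
  rcases abs_cases a with ⟨h1, h2⟩ | ⟨h1, h2⟩ <;>
  rcases abs_cases b with ⟨h3, h4⟩ | ⟨h3, h4⟩ <;>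
  rcases abs_cases (a * b - 1) with ⟨h5, h6⟩ | ⟨h5, h6⟩ <;>
  rcases hab with h | h <;> nlinarith

/-- For integers `a, b` with `|a|, |b| ≥ 2` and `ab ≥ 6` or `ab ≤ -4`, the composite
Möbius map `z ↦ -1/((-1/(z+a)) + b)` decreases the imaginary part of a point of the
closed upper half disk by at least a factor `4`. -/
theorem ST_b_ST_a_contracts (a b : ℤ) (ha : 2 ≤ |a|) (hb : 2 ≤ |b|)
    (hab : 6 ≤ a * b ∨ a * b ≤ -4) (z : ℂ) (hz : ‖z‖ ≤ 1) (him : 0 ≤ z.im) :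
    (-1 / ((-1 / (z + (a : ℂ))) + (b : ℂ))).im ≤ z.im / 4 := by
  set c : ℂ := b * z + (a * b - 1 : ℤ) with hc_def
  have haR : (2:ℝ) ≤ |(a:ℝ)| := by exact_mod_cast ha
  have habs_a : (2:ℝ) ≤ ‖(a:ℂ)‖ := by rw [Complex.norm_intCast]; exact haR
  have hu : z + (a:ℂ) ≠ 0 := by
    intro h
    have h' : (a:ℂ) = -z := by linear_combination h
    have : ‖(a:ℂ)‖ ≤ 1 := by rw [h', norm_neg]; exact hz
    linarith
  have hckey : (2:ℝ) ≤ ‖c‖ := by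
    have h1 : ‖((a*b-1 : ℤ) : ℂ)‖ ≤ ‖c‖ + ‖((b:ℂ) * z)‖ := by
      have h := norm_add_le ((b:ℂ) * z + ((a*b-1 : ℤ) : ℂ)) (-((b:ℂ) * z))
      have e : ((b:ℂ) * z + ((a*b-1 : ℤ) : ℂ)) + (-((b:ℂ) * z)) = ((a*b-1 : ℤ) : ℂ) := by ring
      rw [e, norm_neg] at h
      rw [hc_def]; exact h
    have h2 : ‖((b:ℂ) * z)‖ ≤ |(b:ℝ)| := by
      rw [norm_mul, Complex.norm_intCast]
      calc |(b:ℝ)| * ‖z‖ ≤ |(b:ℝ)| * 1 :=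
            mul_le_mul_of_nonneg_left hz (abs_nonneg _)
        _ = |(b:ℝ)| := mul_one _
    have h3 : |(b:ℝ)| + 2 ≤ |((a*b-1 : ℤ) : ℝ)| := by exact_mod_cast int_key a b ha hb hab
    have h4 : ‖((a*b-1 : ℤ) : ℂ)‖ = |((a*b-1 : ℤ) : ℝ)| := Complex.norm_intCast _
    linarith
  have hc0 : c ≠ 0 := by
    intro h; rw [h] at hckey; simp at hckey; linarith
  have hN : 0 < Complex.normSq c := Complex.normSq_pos.mpr hc0
  have heq : -1 / ((-1 / (z + (a : ℂ))) + (b : ℂ)) = -(z + a) / c := by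
    have hden : (-1 / (z + (a : ℂ))) + (b : ℂ) = c / (z + a) := by
      field_simp [hc_def]; rw [hc_def]; push_cast; ring
    rw [hden]
    field_simp
  have him_eq : (-(z + (a:ℂ)) / c).im = z.im / Complex.normSq c := by
    rw [Complex.div_im]
    have hcre : c.re = (b:ℝ) * z.re + ((a:ℝ) * b - 1) := by
      simp [hc_def, Complex.add_re, Complex.mul_re]
    have hcim : c.im = (b:ℝ) * z.im := by
      simp [hc_def, Complex.add_im, Complex.mul_im]
    rw [hcre, hcim]
    have hre : (-(z + (a:ℂ))).re = -(z.re + (a:ℝ)) := by simp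
    have him' : (-(z + (a:ℂ))).im = -z.im := by simp
    rw [hre, him']
    field_simp
    ring
  rw [heq, him_eq]
  have h4N : (4:ℝ) ≤ Complex.normSq c := by
    have := Complex.sq_norm c
    nlinarith
  exact div_le_div_of_nonneg_left him (by norm_num) h4N
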